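/- arXiv:2207.02174 — 2 statements merged into one kernel-verified Lean document; each statement's English description precedes it below -/
import Mathlib

section
/- Let M \ge 0 on H_1 \oplus H_2 with Schur complement S supported on H_1. Then for every f \in H_1, \langle S f, f \rangle = \inf \{ \langle M(f \oplus g), f \oplus g \rangle : g \in H_2 \}, and this infimum characterization determines S uniquely among positive operators on H_1. -/
open scoped ComplexOrder
open ContinuousLinearMap

open Filter
open scoped InnerProductSpace Topology

local notation "⟪" x ", " y "⟫" => @inner ℂ _ _ x y

lemma coercive_inv {H : Type*} [NormedAddCommGroup H] [InnerProductSpace ℂ H] [CompleteSpace H]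
    (D : H →L[ℂ] H) (ε : ℝ) (hε : 0 < ε)
    (hcoer : ∀ g, ε * ‖g‖ ^ 2 ≤ (⟪D g, g⟫).re) :
    ∃ Di : H →L[ℂ] H, ∀ z, D (Di z) = z := by
  have hbound : ∀ g, ‖g‖ ≤ (⟨ε⁻¹, by positivity⟩ : NNReal) * ‖D g‖ := by
    intro g
    rcases eq_or_lt_of_le (norm_nonneg g) with h0 | h0
    · rw [← h0]; positivity
    · have h1 : ε * ‖g‖ ^ 2 ≤ ‖D g‖ * ‖g‖ := by
        refine (hcoer g).trans ?_
        calc (⟪D g, g⟫).re ≤ ‖(⟪D g, g⟫)‖ := Complex.re_le_norm _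
          _ ≤ ‖D g‖ * ‖g‖ := norm_inner_le_norm _ _
      have h2 : ε * ‖g‖ ≤ ‖D g‖ := by
        nlinarith [h0]
      show ‖g‖ ≤ ε⁻¹ * ‖D g‖
      rw [le_inv_mul_iff₀ hε]
      exact h2
  have hanti : AntilipschitzWith _ D := D.antilipschitz_of_bound hbound
  have hinj : Function.Injective D := hanti.injective
  have hker : LinearMap.ker (D : H →ₗ[ℂ] H) = ⊥ := LinearMap.ker_eq_bot.mpr hinj
  have hclosed : IsClosed (Set.range D) := hanti.isClosed_range D.uniformContinuous
  have hclosed' : IsClosed ((LinearMap.range (D : H →ₗ[ℂ] H) : Submodule ℂ H) : Set H) := by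
    have : ((LinearMap.range (D : H →ₗ[ℂ] H) : Submodule ℂ H) : Set H) = Set.range ⇑D := by
      ext x; simp [LinearMap.mem_range]
    rw [this]; exact hclosed
  have : CompleteSpace (LinearMap.range (D : H →ₗ[ℂ] H) : Submodule ℂ H) := hclosed'.completeSpace_coe
  have hrange : LinearMap.range (D : H →ₗ[ℂ] H) = ⊤ := by
    rw [← Submodule.orthogonal_eq_bot_iff]
    rw [Submodule.eq_bot_iff]
    intro v hv
    have h0 : ⟪D v, v⟫ = 0 := by
      have := (Submodule.mem_orthogonal _ v).mp hv (D v) (LinearMap.mem_range_self _ v)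
      exact this
    have := hcoer v
    rw [h0] at this
    simp only [Complex.zero_re] at this
    have : ‖v‖ ^ 2 ≤ 0 := by nlinarith
    have : ‖v‖ = 0 := by nlinarith [sq_nonneg ‖v‖, norm_nonneg v]
    exact norm_eq_zero.mp this
  let Eq := ContinuousLinearEquiv.ofBijective D hker hrange
  refine ⟨(Eq.symm : H →L[ℂ] H), fun z => ?_⟩
  have h1 : ∀ u, D u = Eq u := fun u => by
    rw [ContinuousLinearEquiv.coeFn_ofBijective]
  show D (Eq.symm z) = z
  rw [h1, Eq.apply_symm_apply]

set_option maxHeartbeats 1000000 in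
lemma schur_exists {H₁ H₂ : Type*}
    [NormedAddCommGroup H₁] [InnerProductSpace ℂ H₁] [CompleteSpace H₁]
    [NormedAddCommGroup H₂] [InnerProductSpace ℂ H₂] [CompleteSpace H₂]
    (A : H₁ →L[ℂ] H₁) (B : H₁ →L[ℂ] H₂) (C : H₂ →L[ℂ] H₂)
    (hM : ∀ (f : H₁) (g : H₂),
      0 ≤ ((inner ℂ (A f) f : ℂ) + inner ℂ ((adjoint B) g) f + inner ℂ (B f) g + inner ℂ (C g) g)) :
    ∃ S₀ : H₁ →L[ℂ] H₁, ∀ f : H₁,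
      (inner ℂ (S₀ f) f : ℂ) = ((sInf {r : ℝ | ∃ g : H₂,
        r = ((inner ℂ (A f) f : ℂ) + inner ℂ ((adjoint B) g) f + inner ℂ (B f) g
              + inner ℂ (C g) g).re} : ℝ) : ℂ) := by
  set Qc : H₁ → H₂ → ℂ := fun f g =>
    ⟪A f, f⟫ + ⟪(adjoint B) g, f⟫ + ⟪B f, g⟫ + ⟪C g, g⟫ with hQcdef
  set s : H₁ → ℝ := fun f => sInf {r : ℝ | ∃ g : H₂, r = (Qc f g).re} with hsdef
  have hQreal : ∀ f g, Qc f g = (((Qc f g).re : ℝ) : ℂ) := by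
    intro f g
    have h := hM f g
    rw [Complex.le_def] at h
    exact Complex.ext (by simp) (by simpa [hQcdef] using h.2.symm)
  have hQ0 : ∀ f g, 0 ≤ (Qc f g).re := by
    intro f g
    have h := hM f g
    rw [Complex.le_def] at h
    simpa [hQcdef] using h.1
  have hne : ∀ f, Set.Nonempty {r : ℝ | ∃ g : H₂, r = (Qc f g).re} :=
    fun f => ⟨(Qc f 0).re, 0, rfl⟩
  have hbdd : ∀ f, BddBelow {r : ℝ | ∃ g : H₂, r = (Qc f g).re} := by
    intro f
    refine ⟨0, ?_⟩
    rintro r ⟨g, rfl⟩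
    exact hQ0 f g
  have hs_le : ∀ f g, s f ≤ (Qc f g).re := fun f g => csInf_le (hbdd f) ⟨g, rfl⟩
  have hs0 : ∀ f, 0 ≤ s f := by
    intro f
    refine le_csInf (hne f) ?_
    rintro r ⟨g, rfl⟩
    exact hQ0 f g
  have hQf0 : ∀ f, Qc f 0 = ⟪A f, f⟫ := by
    intro f; simp [hQcdef]
  have hsA : ∀ f, s f ≤ ‖A‖ * ‖f‖ ^ 2 := by
    intro f
    refine (hs_le f 0).trans ?_
    rw [hQf0]
    calc (⟪A f, f⟫).re ≤ ‖(⟪A f, f⟫)‖ := Complex.re_le_norm _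
      _ ≤ ‖A f‖ * ‖f‖ := norm_inner_le_norm _ _
      _ ≤ ‖A‖ * ‖f‖ * ‖f‖ := by
        have := A.le_opNorm f
        nlinarith [norm_nonneg f]
      _ = ‖A‖ * ‖f‖ ^ 2 := by ring
  -- C is symmetric
  have hC0 : ∀ g, 0 ≤ (⟪C g, g⟫ : ℂ) := by
    intro g
    have h := hM 0 g
    simpa using h
  have hCsym : ∀ g h, (⟪C g, h⟫ : ℂ) = ⟪g, C h⟫ := by
    have := (LinearMap.isSymmetric_iff_inner_map_self_real (↑C : H₂ →ₗ[ℂ] H₂)).mpr ?_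
    · intro g h
      simpa using this g h
    · intro v
      have h := hC0 v
      rw [Complex.le_def] at h
      simp only [ContinuousLinearMap.coe_coe]
      exact Complex.conj_eq_iff_im.mpr h.2.symm
  -- the approximating operators
  set ε : ℕ → ℝ := fun n => 1 / ((n : ℝ) + 1) with hεdef
  have hεpos : ∀ n, 0 < ε n := by intro n; positivity
  have hεtend : Tendsto ε atTop (𝓝 0) := tendsto_one_div_add_atTop_nhds_zero_nat
  set D : ℕ → (H₂ →L[ℂ] H₂) := fun n =>
    C + ((ε n : ℂ) • ContinuousLinearMap.id ℂ H₂) with hDdef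
  have hDapp : ∀ n g, D n g = C g + (ε n : ℂ) • g := by intro n g; simp [hDdef]
  have hDg : ∀ n g, (⟪D n g, g⟫ : ℂ) = ⟪C g, g⟫ + ((ε n * ‖g‖ ^ 2 : ℝ) : ℂ) := by
    intro n g
    rw [hDapp, inner_add_left, inner_smul_left, inner_self_eq_norm_sq_to_K,
      Complex.conj_ofReal]
    rw [Complex.ofReal_mul, Complex.ofReal_pow]
    congr 1
  have hDsym : ∀ n g h, (⟪D n g, h⟫ : ℂ) = ⟪g, D n h⟫ := by
    intro n g h
    rw [hDapp, hDapp, inner_add_left, inner_add_right, inner_smul_left, inner_smul_right,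
      hCsym, Complex.conj_ofReal]
  have hDcoer : ∀ n g, ε n * ‖g‖ ^ 2 ≤ (⟪D n g, g⟫).re := by
    intro n g
    rw [hDg]
    have h := hC0 g
    rw [Complex.le_def] at h
    simp only [Complex.add_re, Complex.ofReal_re]
    have := h.1
    simp only [Complex.zero_re] at this
    linarith
  have hDiex : ∀ n, ∃ Di : H₂ →L[ℂ] H₂, ∀ z, D n (Di z) = z :=
    fun n => coercive_inv (D n) (ε n) (hεpos n) (hDcoer n)
  set Di : ℕ → (H₂ →L[ℂ] H₂) := fun n => (hDiex n).choose with hDidef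
  have hDi : ∀ n z, D n (Di n z) = z := fun n => (hDiex n).choose_spec
  set w : ℕ → H₁ → H₂ := fun n f => Di n (B f) with hwdef
  have hDw : ∀ n f, D n (w n f) = B f := fun n f => hDi n (B f)
  set T : ℕ → (H₁ →L[ℂ] H₁) := fun n => A - (adjoint B).comp ((Di n).comp B) with hTdef
  have hTinner : ∀ n f x, (⟪T n f, x⟫ : ℂ) = ⟪A f, x⟫ - ⟪w n f, B x⟫ := by
    intro n f x
    simp only [hTdef, ContinuousLinearMap.sub_apply, ContinuousLinearMap.comp_apply,
      inner_sub_left]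
    rw [adjoint_inner_left]
  -- the key algebraic identity
  have hkey : ∀ n f g, Qc f g + ((ε n * ‖g‖ ^ 2 : ℝ) : ℂ)
      = ⟪T n f, f⟫ + ⟪D n (g + w n f), g + w n f⟫ := by
    intro n f g
    have e1 : (⟪D n (g + w n f), g + w n f⟫ : ℂ)
        = ⟪D n g, g⟫ + ⟪g, B f⟫ + ⟪B f, g⟫ + ⟪B f, w n f⟫ := by
      rw [map_add, inner_add_left, inner_add_right, inner_add_right, hDw,
        hDsym n g (w n f), hDw]
      ring
    have e2 : (⟪B f, w n f⟫ : ℂ) = ⟪w n f, B f⟫ := by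
      conv_lhs => rw [← hDw n f]
      rw [hDsym, hDw]
    have e3 : (⟪(adjoint B) g, f⟫ : ℂ) = ⟪g, B f⟫ := adjoint_inner_left _ _ _
    simp only [hQcdef]
    rw [hTinner, e1, e2, e3, hDg]
    ring
  set q : ℕ → H₁ → ℝ := fun n f => (⟪T n f, f⟫ : ℂ).re with hqdef
  have hkey0 : ∀ n f, Qc f (-(w n f)) + ((ε n * ‖w n f‖ ^ 2 : ℝ) : ℂ) = ⟪T n f, f⟫ := by
    intro n f
    have h := hkey n f (-(w n f))
    simp only [neg_add_cancel, map_zero, inner_zero_left, add_zero, norm_neg] at h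
    exact h
  have hTim : ∀ n f, (⟪T n f, f⟫ : ℂ).im = 0 := by
    intro n f
    rw [← hkey0 n f, Complex.add_im, Complex.ofReal_im]
    have h2 : (Qc f (-(w n f))).im = 0 := by
      rw [hQreal f (-(w n f))]; simp
    rw [h2]; ring
  have hTreal : ∀ n f, (⟪T n f, f⟫ : ℂ) = ((q n f : ℝ) : ℂ) := by
    intro n f
    refine Complex.ext ?_ ?_
    · simp [hqdef]
    · simp [hTim n f]
  have hql : ∀ n f, s f ≤ q n f := by
    intro n f
    have h := congrArg Complex.re (hkey0 n f)
    simp only [Complex.add_re, Complex.ofReal_re] at h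
    have h2 := hs_le f (-(w n f))
    have h3 : 0 ≤ ε n * ‖w n f‖ ^ 2 := by positivity
    simp only [hqdef]
    linarith
  have hqu : ∀ n f g, q n f ≤ (Qc f g).re + ε n * ‖g‖ ^ 2 := by
    intro n f g
    have h := congrArg Complex.re (hkey n f g)
    simp only [Complex.add_re, Complex.ofReal_re] at h
    have h2 : 0 ≤ (⟪D n (g + w n f), g + w n f⟫ : ℂ).re := by
      refine le_trans ?_ (hDcoer n (g + w n f))
      positivity
    rw [hqdef]
    simp only
    linarith
  have hconv : ∀ f, Tendsto (fun n => q n f) atTop (𝓝 (s f)) := by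
    intro f
    rw [Metric.tendsto_atTop]
    intro δ hδ
    obtain ⟨r, ⟨g, rfl⟩, hr⟩ := exists_lt_of_csInf_lt (hne f)
      (show s f < s f + δ / 2 by linarith)
    have htend2 : Tendsto (fun n => ε n * ‖g‖ ^ 2) atTop (𝓝 0) := by
      have := hεtend.mul_const (‖g‖ ^ 2)
      simpa [hεdef] using this
    obtain ⟨N, hN⟩ := (Metric.tendsto_atTop.mp htend2) (δ / 2) (by linarith)
    refine ⟨N, fun n hn => ?_⟩
    have hN2 := hN n hn
    rw [Real.dist_eq, sub_zero] at hN2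
    have hN3 : ε n * ‖g‖ ^ 2 < δ / 2 := lt_of_abs_lt hN2
    have hu := hqu n f g
    have hl := hql n f
    rw [Real.dist_eq, abs_lt]
    constructor <;> [linarith; linarith]
  have hconvC : ∀ u, Tendsto (fun n => ((q n u : ℝ) : ℂ)) atTop (𝓝 ((s u : ℝ) : ℂ)) :=
    fun u => (Complex.continuous_ofReal.tendsto _).comp (hconv u)
  set Fc : H₁ → H₁ → ℂ := fun x y =>
    (((s (x + y) : ℝ) : ℂ) - ((s (x - y) : ℝ) : ℂ)
      + Complex.I * ((s (x + Complex.I • y) : ℝ) : ℂ)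
      - Complex.I * ((s (x - Complex.I • y) : ℝ) : ℂ)) / 4 with hFcdef
  have hpol : ∀ x y, Tendsto (fun n => (⟪T n y, x⟫ : ℂ)) atTop (𝓝 (Fc x y)) := by
    intro x y
    have heq : ∀ n, (⟪T n y, x⟫ : ℂ) =
        (((q n (x + y) : ℝ) : ℂ) - ((q n (x - y) : ℝ) : ℂ)
          + Complex.I * ((q n (x + Complex.I • y) : ℝ) : ℂ)
          - Complex.I * ((q n (x - Complex.I • y) : ℝ) : ℂ)) / 4 := by
      intro n
      have h := inner_map_polarization ((T n : H₁ →ₗ[ℂ] H₁)) x y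
      simp only [ContinuousLinearMap.coe_coe] at h
      rw [h, ← hTreal, ← hTreal, ← hTreal, ← hTreal]
    simp only [heq, hFcdef]
    exact ((((hconvC (x + y)).sub (hconvC (x - y))).add
      (tendsto_const_nhds.mul (hconvC (x + Complex.I • y)))).sub
      (tendsto_const_nhds.mul (hconvC (x - Complex.I • y)))).div_const 4
  -- algebraic properties of Fc via limits
  have hFadd_x : ∀ x x' y, Fc (x + x') y = Fc x y + Fc x' y := by
    intro x x' y
    refine tendsto_nhds_unique (hpol (x + x') y) ?_
    have heq : ∀ n, (⟪T n y, x + x'⟫ : ℂ) = ⟪T n y, x⟫ + ⟪T n y, x'⟫ :=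
      fun n => inner_add_right _ _ _
    simp only [heq]
    exact (hpol x y).add (hpol x' y)
  have hFsmul_x : ∀ (c : ℂ) x y, Fc (c • x) y = c * Fc x y := by
    intro c x y
    refine tendsto_nhds_unique (hpol (c • x) y) ?_
    have heq : ∀ n, (⟪T n y, c • x⟫ : ℂ) = c * ⟪T n y, x⟫ :=
      fun n => inner_smul_right _ _ _
    simp only [heq]
    exact (hpol x y).const_mul c
  have hFadd_y : ∀ x y y', Fc x (y + y') = Fc x y + Fc x y' := by
    intro x y y'
    refine tendsto_nhds_unique (hpol x (y + y')) ?_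
    have heq : ∀ n, (⟪T n (y + y'), x⟫ : ℂ) = ⟪T n y, x⟫ + ⟪T n y', x⟫ := by
      intro n
      rw [map_add, inner_add_left]
    simp only [heq]
    exact (hpol x y).add (hpol x y')
  have hFsmul_y : ∀ (c : ℂ) x y, Fc x (c • y) = (starRingEnd ℂ) c * Fc x y := by
    intro c x y
    refine tendsto_nhds_unique (hpol x (c • y)) ?_
    have heq : ∀ n, (⟪T n (c • y), x⟫ : ℂ) = (starRingEnd ℂ) c * ⟪T n y, x⟫ := by
      intro n
      rw [map_smul, inner_smul_left]
    simp only [heq]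
    exact (hpol x y).const_mul _
  have hF0x : ∀ y, Fc 0 y = 0 := by
    intro y
    have := hFsmul_x 0 0 y
    simpa using this
  have hF0y : ∀ x, Fc x 0 = 0 := by
    intro x
    have := hFsmul_y 0 x 0
    simpa using this
  have hsb : ∀ u, ‖((s u : ℝ) : ℂ)‖ ≤ ‖A‖ * ‖u‖ ^ 2 := by
    intro u
    rw [Complex.norm_real, Real.norm_eq_abs, abs_of_nonneg (hs0 u)]
    exact hsA u
  have hFbound0 : ∀ x y, ‖Fc x y‖ ≤ ‖A‖ * (‖x‖ ^ 2 + ‖y‖ ^ 2) := by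
    intro x y
    have hIy : ‖Complex.I • y‖ = ‖y‖ := by
      rw [norm_smul, Complex.norm_I, one_mul]
    have t1 : ‖(((s (x + y) : ℝ) : ℂ) - ((s (x - y) : ℝ) : ℂ)
        + Complex.I * ((s (x + Complex.I • y) : ℝ) : ℂ)
        - Complex.I * ((s (x - Complex.I • y) : ℝ) : ℂ))‖
        ≤ ‖((s (x + y) : ℝ) : ℂ)‖ + ‖((s (x - y) : ℝ) : ℂ)‖
          + ‖((s (x + Complex.I • y) : ℝ) : ℂ)‖ + ‖((s (x - Complex.I • y) : ℝ) : ℂ)‖ := by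
      have i1 := norm_sub_le (((s (x + y) : ℝ) : ℂ)) (((s (x - y) : ℝ) : ℂ))
      have i2 := norm_add_le (((s (x + y) : ℝ) : ℂ) - ((s (x - y) : ℝ) : ℂ))
        (Complex.I * ((s (x + Complex.I • y) : ℝ) : ℂ))
      have i3 := norm_sub_le (((s (x + y) : ℝ) : ℂ) - ((s (x - y) : ℝ) : ℂ)
        + Complex.I * ((s (x + Complex.I • y) : ℝ) : ℂ))
        (Complex.I * ((s (x - Complex.I • y) : ℝ) : ℂ))
      have j1 : ‖Complex.I * ((s (x + Complex.I • y) : ℝ) : ℂ)‖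
          = ‖((s (x + Complex.I • y) : ℝ) : ℂ)‖ := by
        rw [norm_mul, Complex.norm_I, one_mul]
      have j2 : ‖Complex.I * ((s (x - Complex.I • y) : ℝ) : ℂ)‖
          = ‖((s (x - Complex.I • y) : ℝ) : ℂ)‖ := by
        rw [norm_mul, Complex.norm_I, one_mul]
      rw [j1] at i2
      rw [j2] at i3
      linarith
    have hnorm : ‖Fc x y‖ ≤ (‖((s (x + y) : ℝ) : ℂ)‖ + ‖((s (x - y) : ℝ) : ℂ)‖
          + ‖((s (x + Complex.I • y) : ℝ) : ℂ)‖ + ‖((s (x - Complex.I • y) : ℝ) : ℂ)‖) / 4 := by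
      simp only [hFcdef]
      rw [norm_div]
      have : ‖(4 : ℂ)‖ = 4 := by norm_num
      rw [this]
      linarith [t1]
    have p1 := parallelogram_law_with_norm ℂ x y
    have p2 := parallelogram_law_with_norm ℂ x (Complex.I • y)
    rw [hIy] at p2
    have p1' : ‖x + y‖ ^ 2 + ‖x - y‖ ^ 2 = 2 * (‖x‖ ^ 2 + ‖y‖ ^ 2) := by
      exact p1
    have p2' : ‖x + Complex.I • y‖ ^ 2 + ‖x - Complex.I • y‖ ^ 2
        = 2 * (‖x‖ ^ 2 + ‖y‖ ^ 2) := by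
      exact p2
    have b1 := hsb (x + y)
    have b2 := hsb (x - y)
    have b3 := hsb (x + Complex.I • y)
    have b4 := hsb (x - Complex.I • y)
    have c1 : ‖A‖ * ‖x + y‖ ^ 2 + ‖A‖ * ‖x - y‖ ^ 2
        = 2 * (‖A‖ * ‖x‖ ^ 2) + 2 * (‖A‖ * ‖y‖ ^ 2) := by
      rw [← mul_add, p1']
      ring
    have c2 : ‖A‖ * ‖x + Complex.I • y‖ ^ 2 + ‖A‖ * ‖x - Complex.I • y‖ ^ 2
        = 2 * (‖A‖ * ‖x‖ ^ 2) + 2 * (‖A‖ * ‖y‖ ^ 2) := by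
      rw [← mul_add, p2']
      ring
    have cg : ‖A‖ * (‖x‖ ^ 2 + ‖y‖ ^ 2) = ‖A‖ * ‖x‖ ^ 2 + ‖A‖ * ‖y‖ ^ 2 := by ring
    linarith
  have hFbound : ∀ x y, ‖Fc x y‖ ≤ 2 * ‖A‖ * ‖x‖ * ‖y‖ := by
    intro x y
    rcases eq_or_ne x 0 with rfl | hx
    · rw [hF0x]
      simp only [norm_zero, norm_zero]
      positivity
    rcases eq_or_ne y 0 with rfl | hy
    · rw [hF0y]
      simp only [norm_zero, norm_zero]
      positivity
    have hxn : (0:ℝ) < ‖x‖ := norm_pos_iff.mpr hx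
    have hyn : (0:ℝ) < ‖y‖ := norm_pos_iff.mpr hy
    set t : ℝ := Real.sqrt (‖y‖ / ‖x‖) with htdef
    have ht : 0 < t := Real.sqrt_pos.mpr (by positivity)
    have ht2 : t ^ 2 = ‖y‖ / ‖x‖ := Real.sq_sqrt (by positivity)
    have key : Fc ((t : ℂ) • x) (((t⁻¹ : ℝ) : ℂ) • y) = Fc x y := by
      rw [hFsmul_y, hFsmul_x, Complex.conj_ofReal]
      calc ((t⁻¹ : ℝ) : ℂ) * ((t : ℂ) * Fc x y) = (((t⁻¹ * t : ℝ)) : ℂ) * Fc x y := by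
            push_cast
            ring
        _ = Fc x y := by
            rw [inv_mul_cancel₀ ht.ne']
            simp
    have hb := hFbound0 ((t : ℂ) • x) (((t⁻¹ : ℝ) : ℂ) • y)
    rw [key] at hb
    have e1 : ‖(t : ℂ) • x‖ = t * ‖x‖ := by
      rw [norm_smul, Complex.norm_real, Real.norm_eq_abs, abs_of_pos ht]
    have e2 : ‖((t⁻¹ : ℝ) : ℂ) • y‖ = t⁻¹ * ‖y‖ := by
      rw [norm_smul, Complex.norm_real, Real.norm_eq_abs, abs_of_pos (inv_pos.mpr ht)]
    rw [e1, e2] at hb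
    have e3 : (t * ‖x‖) ^ 2 = ‖y‖ * ‖x‖ := by
      rw [mul_pow, ht2]
      field_simp
    have e4 : (t⁻¹ * ‖y‖) ^ 2 = ‖x‖ * ‖y‖ := by
      rw [mul_pow, inv_pow, ht2]
      field_simp
    rw [e3, e4] at hb
    calc ‖Fc x y‖ ≤ ‖A‖ * (‖y‖ * ‖x‖ + ‖x‖ * ‖y‖) := hb
      _ = 2 * ‖A‖ * ‖x‖ * ‖y‖ := by ring
  -- the functional and the operator
  set ψ : H₁ → (H₁ →L[ℂ] ℂ) := fun y => LinearMap.mkContinuous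
    { toFun := fun x => Fc x y
      map_add' := fun x x' => hFadd_x x x' y
      map_smul' := fun c x => hFsmul_x c x y }
    (2 * ‖A‖ * ‖y‖) (fun x => by
      calc ‖Fc x y‖ ≤ 2 * ‖A‖ * ‖x‖ * ‖y‖ := hFbound x y
        _ = 2 * ‖A‖ * ‖y‖ * ‖x‖ := by ring) with hψdef
  have hψ : ∀ y x, ψ y x = Fc x y := fun y x => rfl
  set S₀f : H₁ → H₁ := fun y => (InnerProductSpace.toDual ℂ H₁).symm (ψ y) with hS₀fdef
  have hS₀inner : ∀ y x, (⟪S₀f y, x⟫ : ℂ) = Fc x y := by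
    intro y x
    rw [hS₀fdef]
    simp only
    rw [InnerProductSpace.toDual_symm_apply]
    exact hψ y x
  have hS₀add : ∀ y y', S₀f (y + y') = S₀f y + S₀f y' := by
    intro y y'
    refine ext_inner_right ℂ fun v => ?_
    rw [hS₀inner, inner_add_left, hS₀inner, hS₀inner, hFadd_y]
  have hS₀smul : ∀ (c : ℂ) y, S₀f (c • y) = c • S₀f y := by
    intro c y
    refine ext_inner_right ℂ fun v => ?_
    rw [hS₀inner, inner_smul_left, hS₀inner, hFsmul_y]
  have hS₀norm : ∀ y, ‖S₀f y‖ ≤ 2 * ‖A‖ * ‖y‖ := by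
    intro y
    rcases eq_or_ne (S₀f y) 0 with h0 | h0
    · rw [h0]
      simp only [norm_zero]
      positivity
    have hpos : (0:ℝ) < ‖S₀f y‖ := norm_pos_iff.mpr h0
    have h1 : ‖S₀f y‖ ^ 2 = (⟪S₀f y, S₀f y⟫ : ℂ).re := by
      rw [inner_self_eq_norm_sq_to_K]
      simp [← Complex.ofReal_pow]
    have h2 : (⟪S₀f y, S₀f y⟫ : ℂ).re ≤ ‖Fc (S₀f y) y‖ := by
      rw [hS₀inner]
      exact Complex.re_le_norm _
    have h3 := hFbound (S₀f y) y
    nlinarith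
  set S₀lin : H₁ →ₗ[ℂ] H₁ :=
    { toFun := S₀f, map_add' := hS₀add, map_smul' := hS₀smul } with hS₀lindef
  set S₀ : H₁ →L[ℂ] H₁ := S₀lin.mkContinuous (2 * ‖A‖) (fun y => by
    have := hS₀norm y
    calc ‖S₀lin y‖ = ‖S₀f y‖ := rfl
      _ ≤ 2 * ‖A‖ * ‖y‖ := this) with hS₀def
  refine ⟨S₀, fun f => ?_⟩
  have h1 : (⟪S₀ f, f⟫ : ℂ) = Fc f f := hS₀inner f f
  have h2 : Fc f f = ((s f : ℝ) : ℂ) := by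
    refine tendsto_nhds_unique (hpol f f) ?_
    have heq : ∀ n, (⟪T n f, f⟫ : ℂ) = ((q n f : ℝ) : ℂ) := fun n => hTreal n f
    simp only [heq]
    exact hconvC f
  rw [h1, h2]


/-- Let `M = [[A, B*],[B, C]] ≥ 0` on `H₁ ⊕ H₂` and let `S` be its Schur complement supported
on `H₁`, i.e. the largest positive operator on `H₁` with `M - [[S,0],[0,0]] ≥ 0`.  Then for
every `f ∈ H₁`, `⟨Sf, f⟩ = inf { ⟨M(f ⊕ g), f ⊕ g⟩ : g ∈ H₂ }`, and this infimum
characterization determines `S` uniquely among positive operators on `H₁`. -/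
theorem stmt_11 {H₁ H₂ : Type*}
    [NormedAddCommGroup H₁] [InnerProductSpace ℂ H₁] [CompleteSpace H₁]
    [NormedAddCommGroup H₂] [InnerProductSpace ℂ H₂] [CompleteSpace H₂]
    (A : H₁ →L[ℂ] H₁) (B : H₁ →L[ℂ] H₂) (C : H₂ →L[ℂ] H₂)
    (hM : ∀ (f : H₁) (g : H₂),
      0 ≤ ((inner ℂ (A f) f : ℂ) + inner ℂ ((adjoint B) g) f + inner ℂ (B f) g + inner ℂ (C g) g))
    (S : H₁ →L[ℂ] H₁)
    (hSpos : ∀ f, 0 ≤ (inner ℂ (S f) f : ℂ))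
    (hSrem : ∀ (f : H₁) (g : H₂),
      0 ≤ ((inner ℂ (A f) f : ℂ) + inner ℂ ((adjoint B) g) f + inner ℂ (B f) g + inner ℂ (C g) g
            - inner ℂ (S f) f))
    (hSmax : ∀ S' : H₁ →L[ℂ] H₁, (∀ f, 0 ≤ (inner ℂ (S' f) f : ℂ)) →
      (∀ (f : H₁) (g : H₂),
        0 ≤ ((inner ℂ (A f) f : ℂ) + inner ℂ ((adjoint B) g) f + inner ℂ (B f) g + inner ℂ (C g) g
              - inner ℂ (S' f) f)) →
      ∀ f, (inner ℂ (S' f) f : ℂ).re ≤ (inner ℂ (S f) f : ℂ).re) :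
    (∀ f : H₁, IsGLB
      {r : ℝ | ∃ g : H₂,
        r = ((inner ℂ (A f) f : ℂ) + inner ℂ ((adjoint B) g) f + inner ℂ (B f) g + inner ℂ (C g) g).re}
      ((inner ℂ (S f) f : ℂ).re)) ∧
    (∀ S' : H₁ →L[ℂ] H₁, (∀ f, 0 ≤ (inner ℂ (S' f) f : ℂ)) →
      (∀ f : H₁, IsGLB
        {r : ℝ | ∃ g : H₂,
          r = ((inner ℂ (A f) f : ℂ) + inner ℂ ((adjoint B) g) f + inner ℂ (B f) g
                + inner ℂ (C g) g).re}
        ((inner ℂ (S' f) f : ℂ).re)) →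
      S' = S) := by
  obtain ⟨S₀, hS₀⟩ := schur_exists A B C hM
  have hQ0 : ∀ (f : H₁) (g : H₂),
      0 ≤ ((inner ℂ (A f) f : ℂ) + inner ℂ ((adjoint B) g) f + inner ℂ (B f) g
            + inner ℂ (C g) g).re := by
    intro f g
    have h := hM f g
    rw [Complex.le_def] at h
    simpa using h.1
  have hQreal : ∀ (f : H₁) (g : H₂),
      ((inner ℂ (A f) f : ℂ) + inner ℂ ((adjoint B) g) f + inner ℂ (B f) g + inner ℂ (C g) g)
        = ((((inner ℂ (A f) f : ℂ) + inner ℂ ((adjoint B) g) f + inner ℂ (B f) g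
              + inner ℂ (C g) g).re : ℝ) : ℂ) := by
    intro f g
    have h := hM f g
    rw [Complex.le_def] at h
    exact Complex.ext (by simp) (by simpa using h.2.symm)
  have hne : ∀ f : H₁, Set.Nonempty {r : ℝ | ∃ g : H₂,
      r = ((inner ℂ (A f) f : ℂ) + inner ℂ ((adjoint B) g) f + inner ℂ (B f) g
            + inner ℂ (C g) g).re} := fun f => ⟨_, 0, rfl⟩
  have hbdd : ∀ f : H₁, BddBelow {r : ℝ | ∃ g : H₂,
      r = ((inner ℂ (A f) f : ℂ) + inner ℂ ((adjoint B) g) f + inner ℂ (B f) g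
            + inner ℂ (C g) g).re} := by
    intro f
    refine ⟨0, ?_⟩
    rintro r ⟨g, rfl⟩
    exact hQ0 f g
  have hsInf0 : ∀ f : H₁, 0 ≤ sInf {r : ℝ | ∃ g : H₂,
      r = ((inner ℂ (A f) f : ℂ) + inner ℂ ((adjoint B) g) f + inner ℂ (B f) g
            + inner ℂ (C g) g).re} := by
    intro f
    refine le_csInf (hne f) ?_
    rintro r ⟨g, rfl⟩
    exact hQ0 f g
  have hS₀pos : ∀ f, 0 ≤ (inner ℂ (S₀ f) f : ℂ) := by
    intro f
    rw [hS₀ f]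
    exact Complex.zero_le_real.mpr (hsInf0 f)
  have hS₀rem : ∀ (f : H₁) (g : H₂),
      0 ≤ ((inner ℂ (A f) f : ℂ) + inner ℂ ((adjoint B) g) f + inner ℂ (B f) g + inner ℂ (C g) g
            - inner ℂ (S₀ f) f) := by
    intro f g
    rw [hS₀ f, hQreal f g, ← Complex.ofReal_sub]
    refine Complex.zero_le_real.mpr ?_
    have := csInf_le (hbdd f) (Set.mem_setOf.mpr ⟨g, rfl⟩)
    linarith
  have hmax := hSmax S₀ hS₀pos hS₀rem
  have hGLB : ∀ f : H₁, IsGLB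
      {r : ℝ | ∃ g : H₂,
        r = ((inner ℂ (A f) f : ℂ) + inner ℂ ((adjoint B) g) f + inner ℂ (B f) g
              + inner ℂ (C g) g).re}
      ((inner ℂ (S f) f : ℂ).re) := by
    intro f
    constructor
    · rintro r ⟨g, rfl⟩
      have h := hSrem f g
      rw [Complex.le_def] at h
      have h1 := h.1
      simp only [Complex.zero_re, Complex.sub_re] at h1
      linarith
    · intro b hb
      have hble : b ≤ sInf {r : ℝ | ∃ g : H₂,
          r = ((inner ℂ (A f) f : ℂ) + inner ℂ ((adjoint B) g) f + inner ℂ (B f) g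
                + inner ℂ (C g) g).re} := le_csInf (hne f) (fun r hr => hb hr)
      have h2 := hmax f
      rw [hS₀ f] at h2
      simp only [Complex.ofReal_re] at h2
      linarith
  refine ⟨hGLB, ?_⟩
  intro S' hS'pos hS'glb
  have heq : ∀ f : H₁, (inner ℂ (S' f) f : ℂ) = inner ℂ (S f) f := by
    intro f
    have h1 : (inner ℂ (S' f) f : ℂ).re = (inner ℂ (S f) f : ℂ).re :=
      IsGLB.unique (hS'glb f) (hGLB f)
    have h2 := hSpos f
    have h3 := hS'pos f
    rw [Complex.le_def] at h2 h3
    exact Complex.ext h1 (by rw [← h3.2, ← h2.2])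
  have hlin : (↑S' : H₁ →ₗ[ℂ] H₁) = ↑S := by
    rw [← ext_inner_map]
    intro x
    simpa using heq x
  exact ContinuousLinearMap.coe_injective hlin
end

section
/- Let T_Q be a positive semidefinite multi-Toeplitz operator matrix with entries (T_Q)_{ij} = Q_{i-j} \otimes I_d^{\otimes \min(i,j)} (where Q_{-k} = Q_k^*), acting on H_0 \oplus H_1 \oplus H_2 \oplus \cdots with H_k = H \otimes (\mathbb{C}^d)^{\otimes k}. Then the Schur complements S(m) supported on the first m+1 rows and columns satisfy the recurrence S(m) = [[A, B^*],[B, S(m-1) \otimes I_d]] for some operators A: H_0 \to H_0 and B. -/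
set_option maxHeartbeats 1000000
set_option linter.unusedSectionVars false
set_option linter.unusedVariables false
set_option synthInstance.maxHeartbeats 400000


open scoped ComplexOrder
open ContinuousLinearMap

/-- `S` is the Schur complement of `M` supported on the range of the orthogonal projection
`P`: `S` is positive, supported on `ran P`, `M - S ≥ 0`, and `S` is the largest such. -/
def IsSchurCompl {K : Type*} [NormedAddCommGroup K] [InnerProductSpace ℂ K]
    (M P S : K →L[ℂ] K) : Prop :=
  (∀ x, 0 ≤ (inner ℂ (S x) x : ℂ)) ∧ P ∘L S ∘L P = S ∧
  (∀ x, 0 ≤ (inner ℂ ((M - S) x) x : ℂ)) ∧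
  ∀ S' : K →L[ℂ] K, (∀ x, 0 ≤ (inner ℂ (S' x) x : ℂ)) → P ∘L S' ∘L P = S' →
    (∀ x, 0 ≤ (inner ℂ ((M - S') x) x : ℂ)) →
    ∀ x, (inner ℂ (S' x) x : ℂ).re ≤ (inner ℂ (S x) x : ℂ).re

noncomputable section SchurAux

variable {d : ℕ} {H : Type*} [NormedAddCommGroup H] [InnerProductSpace ℂ H] [CompleteSpace H]

abbrev ℋ (d : ℕ) (H : Type*) [NormedAddCommGroup H] : Type _ :=
  lp (fun _ : List (Fin d) => H) 2

lemma single_inner_single (v w : List (Fin d)) (x y : H) :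
    (inner ℂ (lp.single 2 v x : ℋ d H) (lp.single 2 w y) : ℂ)
      = if v = w then (inner ℂ x y : ℂ) else 0 := by
  rw [lp.inner_single_left]
  by_cases h : v = w
  · subst h; rw [if_pos rfl, lp.single_apply_self]
  · rw [if_neg h, lp.single_apply_ne _ _ _ h, inner_zero_right]

lemma vec_ext {a b : ℋ d H}
    (h : ∀ (w : List (Fin d)) (y : H),
      (inner ℂ a (lp.single 2 w y) : ℂ) = inner ℂ b (lp.single 2 w y)) : a = b := by
  apply lp.ext; funext w
  refine ext_inner_right ℂ fun y => ?_
  have := h w y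
  rwa [lp.inner_single_right, lp.inner_single_right] at this

lemma clm_ext_single {A B : ℋ d H →L[ℂ] ℋ d H}
    (h : ∀ (w : List (Fin d)) (x : H), A (lp.single 2 w x) = B (lp.single 2 w x)) : A = B := by
  refine ContinuousLinearMap.ext fun f => ?_
  have hf := lp.hasSum_single (E := fun _ : List (Fin d) => H) (p := 2)
    (by norm_num : (2 : ENNReal) ≠ ⊤) f
  have hA := hf.mapL A
  have hB := hf.mapL B
  have : (fun w : List (Fin d) => A (lp.single 2 w (f w)))
      = fun w => B (lp.single 2 w (f w)) := funext fun w => h w _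
  rw [this] at hA
  exact hA.unique hB

lemma clm_ext_single' {A B : ℋ d H →L[ℂ] ℋ d H}
    (h : ∀ (v : List (Fin d)) (x : H) (w : List (Fin d)) (y : H),
      (inner ℂ (A (lp.single 2 v x)) (lp.single 2 w y) : ℂ)
        = inner ℂ (B (lp.single 2 v x)) (lp.single 2 w y)) : A = B :=
  clm_ext_single fun v x => vec_ext fun w y => h v x w y

end SchurAux

noncomputable section SchurAux2
variable {d : ℕ} {H : Type*} [NormedAddCommGroup H] [InnerProductSpace ℂ H] [CompleteSpace H]

/-- the underlying function of the right-shift (append letter `j`). -/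
def shiftFun (j : Fin d) (f : ∀ _ : List (Fin d), H) : ∀ _ : List (Fin d), H :=
  fun w => if w.getLast? = some j then f w.dropLast else 0

lemma shiftFun_concat (j : Fin d) (f : ∀ _ : List (Fin d), H) (v : List (Fin d)) :
    shiftFun j f (v ++ [j]) = f v := by
  simp [shiftFun]

lemma shiftFun_of_ne (j : Fin d) (f : ∀ _ : List (Fin d), H) {w : List (Fin d)}
    (h : w.getLast? ≠ some j) : shiftFun j f w = 0 := if_neg h

lemma concat_injective (j : Fin d) :
    Function.Injective (fun v : List (Fin d) => v ++ [j]) := fun a b hab =>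
  List.append_cancel_right hab

lemma shiftFun_zero_off_range (j : Fin d) (f : ∀ _ : List (Fin d), H) (w : List (Fin d))
    (hw : w ∉ Set.range (fun v : List (Fin d) => v ++ [j])) : shiftFun j f w = 0 := by
  apply shiftFun_of_ne
  intro h
  exact hw ⟨w.dropLast, List.dropLast_append_getLast? j h⟩

lemma memℓp_shiftFun (j : Fin d) (f : ℋ d H) : Memℓp (shiftFun j (f : ∀ _, H)) 2 := by
  have hp : (0:ℝ) < (2 : ENNReal).toReal := by norm_num
  rw [memℓp_gen_iff hp]
  have hs := lp.memℓp f
  rw [memℓp_gen_iff hp] at hs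
  refine ((concat_injective j).summable_iff ?_).mp ?_
  · intro w hw
    rw [shiftFun_zero_off_range j _ w hw, norm_zero, Real.zero_rpow (by norm_num)]
  · refine hs.congr ?_
    intro v
    simp only [Function.comp_apply, shiftFun_concat]

lemma norm_shiftFun (j : Fin d) (f : ℋ d H) :
    ‖(⟨shiftFun j (f : ∀ _, H), memℓp_shiftFun j f⟩ : ℋ d H)‖ = ‖f‖ := by
  have hp : (0:ℝ) < (2 : ENNReal).toReal := by norm_num
  have h1 := lp.norm_rpow_eq_tsum hp (⟨shiftFun j (f : ∀ _, H), memℓp_shiftFun j f⟩ : ℋ d H)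
  have h2 := lp.norm_rpow_eq_tsum hp f
  have h3 : ∑' w, ‖shiftFun j (f : ∀ _, H) w‖ ^ (2:ENNReal).toReal
      = ∑' v, ‖(f : ∀ _, H) v‖ ^ (2:ENNReal).toReal := by
    rw [← (concat_injective j).tsum_eq (f := fun w => ‖shiftFun j (f : ∀ _, H) w‖ ^ (2:ENNReal).toReal)
      (fun w hw => by
        by_contra hww
        exact hw (by
          show ‖shiftFun j (f : ∀ _, H) w‖ ^ (2:ENNReal).toReal = 0
          rw [shiftFun_zero_off_range j _ w hww, norm_zero, Real.zero_rpow (by norm_num)]))]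
    exact tsum_congr fun v => by rw [shiftFun_concat]
  have key : ‖(⟨shiftFun j (f : ∀ _, H), memℓp_shiftFun j f⟩ : ℋ d H)‖ ^ (2:ENNReal).toReal
      = ‖f‖ ^ (2:ENNReal).toReal := by rw [h1, h2]; exact h3
  have := Real.rpow_left_injOn (x := (2:ENNReal).toReal) (by norm_num)
  exact this (by simp [Set.mem_setOf_eq, norm_nonneg]) (by simp [Set.mem_setOf_eq, norm_nonneg]) key

/-- right-shift operator: `single v x ↦ single (v ++ [j]) x`. -/
def shiftL (j : Fin d) : ℋ d H →L[ℂ] ℋ d H :=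
  LinearMap.mkContinuous
    { toFun := fun f => (⟨shiftFun j (f : ∀ _, H), memℓp_shiftFun j f⟩ : ℋ d H)
      map_add' := fun f g => by
        apply lp.ext; funext w
        simp only [lp.coeFn_add, Pi.add_apply, shiftFun]
        split_ifs <;> simp
      map_smul' := fun c f => by
        apply lp.ext; funext w
        simp only [lp.coeFn_smul, Pi.smul_apply, shiftFun, RingHom.id_apply]
        split_ifs <;> simp }
    1 (fun f => by rw [one_mul]; exact le_of_eq (norm_shiftFun j f))

lemma shiftL_apply (j : Fin d) (f : ℋ d H) :
    (shiftL j f : ∀ _ : List (Fin d), H) = shiftFun j (f : ∀ _, H) := rfl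

lemma shiftL_single (j : Fin d) (v : List (Fin d)) (x : H) :
    shiftL j (lp.single 2 v x) = lp.single 2 (v ++ [j]) x := by
  apply lp.ext; funext w
  rw [shiftL_apply]
  by_cases h : w = v ++ [j]
  · subst h
    rw [shiftFun_concat, lp.single_apply_self, lp.single_apply_self]
  · rw [lp.single_apply_ne _ _ _ h]
    by_cases hl : w.getLast? = some j
    · have hw : w.dropLast ++ [j] = w := List.dropLast_append_getLast? j hl
      rw [shiftFun] ; rw [if_pos hl]
      have : w.dropLast ≠ v := fun hc => h (by rw [← hw, hc])
      exact lp.single_apply_ne _ _ _ this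
    · exact shiftFun_of_ne j _ hl

end SchurAux2

noncomputable section SchurAux3
variable {d : ℕ} {H : Type*} [NormedAddCommGroup H] [InnerProductSpace ℂ H] [CompleteSpace H]

lemma adj_shift_single_concat (j : Fin d) (v : List (Fin d)) (x : H) :
    adjoint (shiftL j) (lp.single 2 (v ++ [j]) x) = (lp.single 2 v x : ℋ d H) := by
  refine vec_ext fun w y => ?_
  rw [adjoint_inner_left, shiftL_single, single_inner_single, single_inner_single]
  simp

lemma adj_shift_single_zero (j : Fin d) (w : List (Fin d)) (x : H)
    (h : w.getLast? ≠ some j) : adjoint (shiftL j) (lp.single 2 w x) = (0 : ℋ d H) := by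
  refine vec_ext fun u y => ?_
  rw [adjoint_inner_left, shiftL_single, single_inner_single, inner_zero_left]
  rw [if_neg]
  intro hc
  exact h (by rw [hc, List.getLast?_concat])

lemma adj_shift_comp_shift (j : Fin d) :
    adjoint (shiftL j) ∘L shiftL j = (1 : ℋ d H →L[ℂ] ℋ d H) :=
  clm_ext_single fun w x => by
    rw [comp_apply, shiftL_single, adj_shift_single_concat, ContinuousLinearMap.one_apply]

lemma adj_shift_comp_shift_ne {j k : Fin d} (h : j ≠ k) :
    adjoint (shiftL j) ∘L shiftL k = (0 : ℋ d H →L[ℂ] ℋ d H) :=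
  clm_ext_single fun w x => by
    rw [comp_apply, shiftL_single, adj_shift_single_zero, zero_apply]
    rw [List.getLast?_concat]
    exact fun hc => h (Option.some.inj hc).symm

/-- completeness of letters: identity decomposition -/
lemma decomp_one (P : ℕ → (ℋ d H →L[ℂ] ℋ d H))
    (hP : ∀ (m : ℕ) (w : List (Fin d)) (x : H),
      P m (lp.single 2 w x) = if w.length ≤ m then lp.single 2 w x else 0) :
    P 0 + ∑ k : Fin d, shiftL k ∘L adjoint (shiftL k) = (1 : ℋ d H →L[ℂ] ℋ d H) :=
  clm_ext_single fun w x => by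
    rw [ContinuousLinearMap.add_apply, ContinuousLinearMap.sum_apply, ContinuousLinearMap.one_apply]
    induction w using List.reverseRecOn with
    | nil =>
        rw [hP 0 [] x, if_pos (by simp)]
        rw [Finset.sum_eq_zero, add_zero]
        intro k _
        rw [comp_apply, adj_shift_single_zero k [] x (by simp), map_zero]
    | append_singleton u a _ =>
        rw [hP 0 (u ++ [a]) x, if_neg (by simp)]
        rw [zero_add]
        have : ∀ k : Fin d, (shiftL k ∘L adjoint (shiftL k)) (lp.single 2 (u ++ [a]) x)
            = if k = a then lp.single 2 (u ++ [a]) x else 0 := by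
          intro k
          by_cases hk : k = a
          · subst hk
            rw [comp_apply, adj_shift_single_concat, shiftL_single, if_pos rfl]
          · rw [comp_apply, adj_shift_single_zero k (u ++ [a]) x
              (by rw [List.getLast?_concat]; exact fun hc => hk (Option.some.inj hc).symm),
              map_zero, if_neg hk]
        rw [Finset.sum_congr rfl fun k _ => this k]
        simp

end SchurAux3

noncomputable section SchurAux4
variable {d : ℕ} {H : Type*} [NormedAddCommGroup H] [InnerProductSpace ℂ H] [CompleteSpace H]
variable (P : ℕ → (ℋ d H →L[ℂ] ℋ d H))
variable (hP : ∀ (m : ℕ) (w : List (Fin d)) (x : H),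
      P m (lp.single 2 w x) = if w.length ≤ m then lp.single 2 w x else 0)
include hP

lemma P_adj (m : ℕ) : adjoint (P m) = P m := by
  refine clm_ext_single' fun v x w y => ?_
  rw [adjoint_inner_left, hP m, hP m]
  by_cases hvw : v = w
  · subst hvw; split_ifs <;> simp
  · split_ifs <;>
      simp [single_inner_single, hvw, inner_zero_left, inner_zero_right]

lemma P_idem (m : ℕ) : P m ∘L P m = P m := by
  refine clm_ext_single fun w x => ?_
  by_cases h : w.length ≤ m <;> simp [hP m, h]

lemma P_shift (m : ℕ) (j : Fin d) : P (m + 1) ∘L shiftL j = shiftL j ∘L P m := by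
  refine clm_ext_single fun w x => ?_
  rw [comp_apply, comp_apply, shiftL_single, hP, hP]
  by_cases h : w.length ≤ m
  · rw [if_pos h, if_pos (by simpa using Nat.add_le_add_right h 1), shiftL_single]
  · rw [if_neg h, if_neg (by simpa using fun hc => h (Nat.le_of_succ_le_succ hc)), map_zero]

lemma shift_adj_P (m : ℕ) (j : Fin d) :
    adjoint (shiftL j) ∘L P (m + 1) = P m ∘L adjoint (shiftL j) := by
  have h := congrArg ContinuousLinearMap.adjoint (P_shift P hP m j)
  rw [adjoint_comp, adjoint_comp, P_adj P hP, P_adj P hP] at h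
  exact h

lemma P0_comp_P (m : ℕ) : P 0 ∘L P m = P 0 := by
  refine clm_ext_single fun w x => ?_
  rw [comp_apply, hP m]
  by_cases h : w.length ≤ m
  · rw [if_pos h]
  · rw [if_neg h, map_zero, hP 0, if_neg (fun hc => h (le_trans hc (Nat.zero_le m)))]

lemma P0_comp_shift (j : Fin d) : P 0 ∘L shiftL j = 0 := by
  refine clm_ext_single fun w x => ?_
  rw [comp_apply, shiftL_single, hP 0, if_neg (by simp), zero_apply]

end SchurAux4

noncomputable section SchurAux5
variable {d : ℕ} {H : Type*} [NormedAddCommGroup H] [InnerProductSpace ℂ H] [CompleteSpace H]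
variable (T : ℋ d H →L[ℂ] ℋ d H) (Q : List (Fin d) → (H →L[ℂ] H))
variable (hT1 : ∀ (u v : List (Fin d)) (x y : H),
      (inner ℂ (T (lp.single 2 v x)) (lp.single 2 (u ++ v) y) : ℂ) = inner ℂ (Q u x) y)
    (hT2 : ∀ (u w : List (Fin d)) (x y : H),
      (inner ℂ (T (lp.single 2 (u ++ w) x)) (lp.single 2 w y) : ℂ) = inner ℂ x (Q u y))
    (hT3 : ∀ (v w : List (Fin d)), (¬ ∃ u, w = u ++ v) → (¬ ∃ u, v = u ++ w) →
      ∀ (x y : H), (inner ℂ (T (lp.single 2 v x)) (lp.single 2 w y) : ℂ) = 0)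

include hT1 hT2 hT3 in
lemma T_shift_invariant (j : Fin d) :
    adjoint (shiftL j) ∘L (T ∘L shiftL j) = T := by
  refine clm_ext_single' fun v x w y => ?_
  rw [comp_apply, comp_apply, adjoint_inner_left, shiftL_single, shiftL_single]
  by_cases h1 : ∃ u, w = u ++ v
  · obtain ⟨u, rfl⟩ := h1
    have ha := hT1 u (v ++ [j]) x y
    rw [← List.append_assoc] at ha
    rw [ha, hT1 u v x y]
  · by_cases h2 : ∃ u, v = u ++ w
    · obtain ⟨u, rfl⟩ := h2
      have ha := hT2 u (w ++ [j]) x y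
      rw [← List.append_assoc] at ha
      rw [ha, hT2 u w x y]
    · rw [hT3 v w h1 h2 x y]
      refine hT3 (v ++ [j]) (w ++ [j]) ?_ ?_ x y
      · rintro ⟨u, hu⟩
        rw [← List.append_assoc] at hu
        exact h1 ⟨u, List.append_cancel_right hu⟩
      · rintro ⟨u, hu⟩
        rw [← List.append_assoc] at hu
        exact h2 ⟨u, List.append_cancel_right hu⟩

include hT3 in
lemma T_shift_orth {j k : Fin d} (h : j ≠ k) :
    adjoint (shiftL k) ∘L (T ∘L shiftL j) = 0 := by
  refine clm_ext_single' fun v x w y => ?_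
  rw [comp_apply, comp_apply, adjoint_inner_left, shiftL_single, shiftL_single,
    zero_apply, inner_zero_left]
  refine hT3 (v ++ [j]) (w ++ [k]) ?_ ?_ x y
  · rintro ⟨u, hu⟩
    rw [← List.append_assoc] at hu
    have := congrArg List.getLast? hu
    rw [List.getLast?_concat, List.getLast?_concat] at this
    exact h (Option.some.inj this).symm
  · rintro ⟨u, hu⟩
    rw [← List.append_assoc] at hu
    have := congrArg List.getLast? hu
    rw [List.getLast?_concat, List.getLast?_concat] at this
    exact h (Option.some.inj this)

include hT3 in
lemma T_shift_orth_form {j k : Fin d} (h : j ≠ k) (a b : ℋ d H) :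
    (inner ℂ (T (shiftL j a)) (shiftL k b) : ℂ) = 0 := by
  have h0 := T_shift_orth T hT3 h
  have : (inner ℂ (adjoint (shiftL k) (T (shiftL j a))) b : ℂ) = 0 := by
    have hc : (adjoint (shiftL k) ∘L (T ∘L shiftL j)) a = 0 := by rw [h0]; rfl
    rw [comp_apply, comp_apply] at hc
    rw [hc, inner_zero_left]
  rwa [adjoint_inner_left] at this

end SchurAux5

noncomputable section SchurAux6

variable {E : Type*} [NormedAddCommGroup E] [InnerProductSpace ℂ E] [CompleteSpace E]

lemma cnonneg_re {c : ℂ} (h : 0 ≤ c) : 0 ≤ c.re := by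
  rw [Complex.le_def] at h; simpa using h.1

lemma cnonneg_im {c : ℂ} (h : 0 ≤ c) : c.im = 0 := by
  rw [Complex.le_def] at h; simpa using h.2.symm

lemma inner_self_re' (a : E) : (inner ℂ a a : ℂ).re = ‖a‖ ^ 2 := by
  simpa using inner_self_eq_norm_sq (𝕜 := ℂ) a

lemma inner_self_im' (a : E) : (inner ℂ a a : ℂ).im = 0 := by
  have h : (starRingEnd ℂ) (inner ℂ a a : ℂ) = inner ℂ a a := inner_conj_symm a a
  have h2 := congrArg Complex.im h
  rw [Complex.conj_im] at h2
  linarith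

lemma inner_self_nonneg_complex (a : E) : 0 ≤ (inner ℂ a a : ℂ) := by
  rw [Complex.le_def]
  refine ⟨?_, ?_⟩
  · rw [Complex.zero_re, inner_self_re']
    exact sq_nonneg _
  · rw [Complex.zero_im, inner_self_im']

lemma adj_eq_of_pos {A : E →L[ℂ] E} (h : ∀ x, 0 ≤ (inner ℂ (A x) x : ℂ)) :
    adjoint A = A := by
  have h2 : ∀ x, (inner ℂ ((A - adjoint A) x) x : ℂ) = 0 := by
    intro x
    rw [ContinuousLinearMap.sub_apply, inner_sub_left]
    have hre : (inner ℂ (adjoint A x) x : ℂ) = inner ℂ (A x) x := by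
      rw [adjoint_inner_left, ← inner_conj_symm]
      exact Complex.conj_eq_iff_im.mpr (cnonneg_im (h x))
    rw [hre, sub_self]
  have h3 : ((A - adjoint A : E →L[ℂ] E) : E →ₗ[ℂ] E) = 0 :=
    (inner_map_self_eq_zero _).mp fun x => h2 x
  have h4 : (A - adjoint A : E →L[ℂ] E) = 0 := ContinuousLinearMap.coe_injective h3
  exact (sub_eq_zero.mp h4).symm

lemma move_sa {A : E →L[ℂ] E} (hA : adjoint A = A) (a b : E) :
    (inner ℂ (A a) b : ℂ) = inner ℂ a (A b) := by
  conv_lhs => rw [← hA]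
  rw [adjoint_inner_left]

lemma form_restrict {Pm Sm : E →L[ℂ] E} (hpadj : adjoint Pm = Pm)
    (hpsp : Pm ∘L Sm ∘L Pm = Sm) (u y : E) (hy : Pm y = 0) :
    (inner ℂ (Sm (u + y)) (u + y) : ℂ) = inner ℂ (Sm u) u := by
  have h1 : ∀ z : E, (inner ℂ (Sm z) z : ℂ) = inner ℂ (Sm (Pm z)) (Pm z) := by
    intro z
    conv_lhs => rw [← hpsp]
    rw [comp_apply, comp_apply, move_sa hpadj]
  rw [h1 (u + y), h1 u, map_add, hy, add_zero]

lemma easy_dir {Tm Pm Sm : E →L[ℂ] E} (hsch : IsSchurCompl Tm Pm Sm)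
    (hpadj : adjoint Pm = Pm) (u y : E) (hy : Pm y = 0) :
    (inner ℂ (Sm u) u : ℂ).re ≤ (inner ℂ (Tm (u + y)) (u + y) : ℂ).re := by
  have h := cnonneg_re (hsch.2.2.1 (u + y))
  rw [ContinuousLinearMap.sub_apply, inner_sub_left, Complex.sub_re] at h
  have h2 := form_restrict hpadj hsch.2.1 u y hy
  rw [h2] at h
  linarith

/-- Key approximation lemma: the defect `T - S` can be made small along `ker P`. -/
lemma key_approx {Tm Pm Sm : E →L[ℂ] E} (hsch : IsSchurCompl Tm Pm Sm)
    (hpadj : adjoint Pm = Pm) (hpidem : Pm ∘L Pm = Pm) (u : E) {ε : ℝ} (hε : 0 < ε) :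
    ∃ y, Pm y = 0 ∧ (inner ℂ ((Tm - Sm) (u + y)) (u + y) : ℂ).re < ε := by
  classical
  set M : E →L[ℂ] E := Tm - Sm with hM
  have hM0 : ∀ z, 0 ≤ (inner ℂ (M z) z : ℂ) := hsch.2.2.1
  have hMpos : (0 : E →L[ℂ] E) ≤ M := by
    rw [ContinuousLinearMap.nonneg_iff_isPositive, ContinuousLinearMap.isPositive_iff_complex]
    intro x
    refine ⟨?_, cnonneg_re (hM0 x)⟩
    apply Complex.ext <;> simp [cnonneg_im (hM0 x)]
  set A : E →L[ℂ] E := CFC.sqrt M with hA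
  have hAA : A ∘L A = M := CFC.sqrt_mul_sqrt_self M hMpos
  have hAsa : adjoint A = A :=
    ((ContinuousLinearMap.nonneg_iff_isPositive A).mp (CFC.sqrt_nonneg M)).isSelfAdjoint
  have hMz : ∀ z, (inner ℂ (M z) z : ℂ) = inner ℂ (A z) (A z) := by
    intro z
    have h0 : M z = A (A z) := by rw [← hAA]; rfl
    rw [h0, move_sa hAsa]
  set K : Submodule ℂ E := (LinearMap.range ((A ∘L (1 - Pm)) : E →ₗ[ℂ] E)).topologicalClosure
    with hK
  haveI : CompleteSpace K := (Submodule.isClosed_topologicalClosure _).completeSpace_coe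
  set B : E →L[ℂ] E := A - (K.subtypeL ∘L K.orthogonalProjection) ∘L A with hB
  have hBval : ∀ z, B z = A z - (K.orthogonalProjection (A z) : E) := fun z => rfl
  have hBzero : ∀ z, A z ∈ K → B z = 0 := by
    intro z hz
    rw [hBval, show ((K.orthogonalProjection (A z) : E)) = A z from
      Submodule.starProjection_eq_self_iff.mpr hz, sub_self]
  have hBkills : ∀ z, B ((1 - Pm) z) = 0 := by
    intro z
    exact hBzero _ (Submodule.le_topologicalClosure _ (LinearMap.mem_range_self _ z))
  set R : E →L[ℂ] E := adjoint B ∘L B with hR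
  have hRform : ∀ z, (inner ℂ (R z) z : ℂ) = inner ℂ (B z) (B z) := by
    intro z
    rw [comp_apply, adjoint_inner_left]
  have hRpos : ∀ z, 0 ≤ (inner ℂ (R z) z : ℂ) := by
    intro z
    rw [hRform]
    exact inner_self_nonneg_complex _
  have hBle : ∀ z, ‖B z‖ ^ 2 ≤ ‖A z‖ ^ 2 := by
    intro z
    have hvp : A z - (K.orthogonalProjection (A z) : E) ∈ Kᗮ :=
      Submodule.sub_starProjection_mem_orthogonal (K := K) (A z)
    have horth : (inner ℂ (A z - (K.orthogonalProjection (A z) : E))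
        ((K.orthogonalProjection (A z) : E)) : ℂ) = 0 := by
      rw [← inner_conj_symm,
        (Submodule.mem_orthogonal K _).mp hvp _ (Submodule.coe_mem _)]
      simp
    have hpy := norm_add_sq (𝕜 := ℂ) (A z - (K.orthogonalProjection (A z) : E))
      (K.orthogonalProjection (A z) : E)
    rw [horth] at hpy
    simp only [map_zero, mul_zero, add_zero] at hpy
    have hsum : A z - (K.orthogonalProjection (A z) : E)
        + (K.orthogonalProjection (A z) : E) = A z := by abel
    rw [hsum] at hpy
    have hBv : B z = A z - (K.orthogonalProjection (A z) : E) := hBval z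
    rw [hBv]
    nlinarith [sq_nonneg ‖(K.orthogonalProjection (A z) : E)‖]
  have hB1P : B ∘L (1 - Pm) = 0 := ContinuousLinearMap.ext fun z => hBkills z
  have hBP : B ∘L Pm = B := by
    have h1 : B - B ∘L Pm = 0 := by
      rw [← hB1P]
      refine ContinuousLinearMap.ext fun z => ?_
      simp only [ContinuousLinearMap.sub_apply, comp_apply, ContinuousLinearMap.one_apply,
        map_sub]
    exact (sub_eq_zero.mp h1).symm
  have hPRP : Pm ∘L R ∘L Pm = R := by
    have h1 : Pm ∘L R ∘L Pm = (adjoint (B ∘L Pm)) ∘L (B ∘L Pm) := by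
      rw [adjoint_comp, hpadj]
      refine ContinuousLinearMap.ext fun z => ?_
      simp only [comp_apply]
      rfl
    rw [h1, hBP, hR]
  have hmax := hsch.2.2.2 (Sm + R)
    (fun x => by
      rw [ContinuousLinearMap.add_apply, inner_add_left]
      exact add_nonneg (hsch.1 x) (hRpos x))
    (by rw [ContinuousLinearMap.add_comp, ContinuousLinearMap.comp_add, hsch.2.1, hPRP])
    (fun x => by
      have h0 : (Tm - (Sm + R)) x = M x - R x := by
        simp only [ContinuousLinearMap.sub_apply, ContinuousLinearMap.add_apply, hM]
        abel
      rw [h0, inner_sub_left, hMz, hRform, Complex.le_def]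
      refine ⟨?_, ?_⟩
      · rw [Complex.zero_re, Complex.sub_re, inner_self_re', inner_self_re']
        linarith [hBle x]
      · rw [Complex.zero_im, Complex.sub_im, inner_self_im', inner_self_im']
        norm_num)
  have hB0 : ∀ z, B z = 0 := by
    intro z
    have h1 := hmax z
    rw [ContinuousLinearMap.add_apply, inner_add_left, Complex.add_re] at h1
    have h2 : (inner ℂ (R z) z : ℂ).re ≤ 0 := by linarith
    rw [hRform, inner_self_re'] at h2
    have h3 := norm_nonneg (B z)
    have hz : ‖B z‖ = 0 := by nlinarith
    exact norm_eq_zero.mp hz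
  have hmem : A u ∈ closure ((LinearMap.range ((A ∘L (1 - Pm)) : E →ₗ[ℂ] E) : Submodule ℂ E)
      : Set E) := by
    rw [← Submodule.topologicalClosure_coe]
    have h0 := hB0 u
    rw [hBval, sub_eq_zero] at h0
    rw [h0]
    exact Submodule.coe_mem _
  obtain ⟨b, hbmem, hbdist⟩ := Metric.mem_closure_iff.mp hmem (Real.sqrt ε)
    (Real.sqrt_pos.mpr hε)
  obtain ⟨c, hc⟩ := hbmem
  refine ⟨-((1 - Pm) c), ?_, ?_⟩
  · have h5 : Pm (Pm c) = Pm c := by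
      have h6 := congrArg (fun (X : E →L[ℂ] E) => X c) hpidem
      simpa [comp_apply] using h6
    rw [map_neg, neg_eq_zero, ContinuousLinearMap.sub_apply, ContinuousLinearMap.one_apply,
      map_sub, h5, sub_self]
  · have hAc : A (u + -((1 - Pm) c)) = A u - b := by
      rw [map_add, map_neg, ← hc]
      simp only [ContinuousLinearMap.coe_comp', Function.comp_apply,
        ContinuousLinearMap.coe_coe]
      abel
    have h7 : (inner ℂ ((Tm - Sm) (u + -((1 - Pm) c))) (u + -((1 - Pm) c)) : ℂ).re
        = ‖A u - b‖ ^ 2 := by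
      rw [← hM, hMz, hAc, inner_self_re']
    rw [h7]
    have hd : ‖A u - b‖ < Real.sqrt ε := by rw [← dist_eq_norm]; exact hbdist
    have h0 : (0:ℝ) ≤ ‖A u - b‖ := norm_nonneg _
    nlinarith [Real.sq_sqrt hε.le]

end SchurAux6

noncomputable section SchurMain
variable {d : ℕ} {H : Type*} [NormedAddCommGroup H] [InnerProductSpace ℂ H] [CompleteSpace H]
variable (T : ℋ d H →L[ℂ] ℋ d H) (Q : List (Fin d) → (H →L[ℂ] H))
variable (P : ℕ → (ℋ d H →L[ℂ] ℋ d H)) (S : ℕ → (ℋ d H →L[ℂ] ℋ d H))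
variable (hT3 : ∀ (v w : List (Fin d)), (¬ ∃ u, w = u ++ v) → (¬ ∃ u, v = u ++ w) →
      ∀ (x y : H), (inner ℂ (T (lp.single 2 v x)) (lp.single 2 w y) : ℂ) = 0)
variable (hP : ∀ (m : ℕ) (w : List (Fin d)) (x : H),
      P m (lp.single 2 w x) = if w.length ≤ m then lp.single 2 w x else 0)

include hT3 hP in
lemma T_cross_right (j : Fin d) (a c : ℋ d H) (hc0 : P 0 c = 0)
    (hcj : adjoint (shiftL j) c = 0) : (inner ℂ (T (shiftL j a)) c : ℂ) = 0 := by
  have hdec := congrArg (fun (X : ℋ d H →L[ℂ] ℋ d H) => X c) (decomp_one P hP)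
  simp only [ContinuousLinearMap.add_apply, ContinuousLinearMap.sum_apply, comp_apply,
    ContinuousLinearMap.one_apply] at hdec
  conv_lhs => rw [← hdec]
  rw [inner_add_right, hc0, inner_zero_right, zero_add, inner_sum]
  refine Finset.sum_eq_zero fun k _ => ?_
  by_cases hk : k = j
  · subst hk; rw [hcj, map_zero, inner_zero_right]
  · exact T_shift_orth_form T hT3 (fun hc => hk hc.symm) a _

include hT3 hP in
lemma T_cross_left (j : Fin d) (a c : ℋ d H) (hc0 : P 0 c = 0)
    (hcj : adjoint (shiftL j) c = 0) : (inner ℂ (T c) (shiftL j a) : ℂ) = 0 := by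
  have hdec := congrArg (fun (X : ℋ d H →L[ℂ] ℋ d H) => X c) (decomp_one P hP)
  simp only [ContinuousLinearMap.add_apply, ContinuousLinearMap.sum_apply, comp_apply,
    ContinuousLinearMap.one_apply] at hdec
  conv_lhs => rw [← hdec]
  rw [map_add, inner_add_left, hc0, map_zero, inner_zero_left, zero_add, map_sum, sum_inner]
  refine Finset.sum_eq_zero fun k _ => ?_
  by_cases hk : k = j
  · subst hk; rw [hcj, map_zero, map_zero, inner_zero_left]
  · exact T_shift_orth_form T hT3 hk _ a

variable (hT1 : ∀ (u v : List (Fin d)) (x y : H),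
      (inner ℂ (T (lp.single 2 v x)) (lp.single 2 (u ++ v) y) : ℂ) = inner ℂ (Q u x) y)
    (hT2 : ∀ (u w : List (Fin d)) (x y : H),
      (inner ℂ (T (lp.single 2 (u ++ w) x)) (lp.single 2 w y) : ℂ) = inner ℂ x (Q u y))
    (hTpos : ∀ z, 0 ≤ (inner ℂ (T z) z : ℂ))
    (hS : ∀ m, IsSchurCompl T (P m) (S m))

include hT1 hT2 hT3 hP hS hTpos in
lemma claimA (n : ℕ) (j : Fin d) :
    adjoint (shiftL j) ∘L (S (n+1) ∘L shiftL j) = S n := by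
  set Dop : ℋ d H →L[ℂ] ℋ d H := adjoint (shiftL j) ∘L (S (n+1) ∘L shiftL j) with hDop
  have hDform : ∀ a, (inner ℂ (Dop a) a : ℂ) = inner ℂ (S (n+1) (shiftL j a)) (shiftL j a) :=
    fun a => by rw [hDop, comp_apply, comp_apply, adjoint_inner_left]
  have hDjRj : ∀ f : ℋ d H, adjoint (shiftL j) (shiftL j f) = f := fun f => by
    have h := congrArg (fun (X : ℋ d H →L[ℂ] ℋ d H) => X f) (adj_shift_comp_shift j)
    simpa [comp_apply] using h
  have hfun1 : ∀ f : ℋ d H, shiftL j (P n f) = P (n+1) (shiftL j f) := fun f => by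
    have h := congrArg (fun (X : ℋ d H →L[ℂ] ℋ d H) => X f) (P_shift P hP n j)
    simpa [comp_apply] using h.symm
  have hfun2 : ∀ f : ℋ d H, P n (adjoint (shiftL j) f) = adjoint (shiftL j) (P (n+1) f) :=
    fun f => by
    have h := congrArg (fun (X : ℋ d H →L[ℂ] ℋ d H) => X f) (shift_adj_P P hP n j)
    simpa [comp_apply] using h.symm
  have hPSP : ∀ f : ℋ d H, P (n+1) (S (n+1) (P (n+1) f)) = S (n+1) f := fun f => by
    have h := congrArg (fun (X : ℋ d H →L[ℂ] ℋ d H) => X f) (hS (n+1)).2.1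
    simpa [comp_apply] using h
  have hTinv : ∀ f : ℋ d H, adjoint (shiftL j) (T (shiftL j f)) = T f := fun f => by
    have h := congrArg (fun (X : ℋ d H →L[ℂ] ℋ d H) => X f)
      (T_shift_invariant T Q hT1 hT2 hT3 j)
    simpa [comp_apply] using h
  -- upper bound via maximality of S n
  have hle : ∀ a, (inner ℂ (S (n+1) (shiftL j a)) (shiftL j a) : ℂ).re
      ≤ (inner ℂ (S n a) a : ℂ).re := by
    intro a
    have hmax := (hS n).2.2.2 Dop
      (fun x => by rw [hDform]; exact (hS (n+1)).1 _)
      (by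
        refine ContinuousLinearMap.ext fun z => ?_
        simp only [comp_apply, hDop]
        rw [hfun2, hfun1, hPSP])
      (fun z => by
        have h1 : ((T - Dop) z) = T z - Dop z := rfl
        rw [h1, inner_sub_left, hDform]
        have h2 : (inner ℂ (T z) z : ℂ) = inner ℂ (T (shiftL j z)) (shiftL j z) := by
          conv_lhs => rw [← hTinv z]
          rw [adjoint_inner_left]
        rw [h2]
        have h3 := (hS (n+1)).2.2.1 (shiftL j z)
        rw [ContinuousLinearMap.sub_apply, inner_sub_left] at h3
        exact h3) a
    rw [hDform] at hmax
    exact hmax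
  -- lower bound via key approximation
  have hge : ∀ a, (inner ℂ (S n a) a : ℂ).re
      ≤ (inner ℂ (S (n+1) (shiftL j a)) (shiftL j a) : ℂ).re := by
    intro a
    refine le_of_forall_pos_le_add fun ε hε => ?_
    obtain ⟨y, hy, hlt⟩ := key_approx (hS (n+1)) (P_adj P hP (n+1)) (P_idem P hP (n+1))
      (shiftL j a) hε
    set zj := adjoint (shiftL j) y with hzj
    set c := y - shiftL j zj with hc
    have hcj : adjoint (shiftL j) c = 0 := by
      rw [hc, map_sub, hDjRj, hzj, sub_self]
    have hP0y : P 0 y = 0 := by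
      have h := congrArg (fun (X : ℋ d H →L[ℂ] ℋ d H) => X y) (P0_comp_P P hP (n+1))
      simp only [comp_apply] at h
      rw [← h, hy, map_zero]
    have hc0 : P 0 c = 0 := by
      rw [hc, map_sub, hP0y]
      have h := congrArg (fun (X : ℋ d H →L[ℂ] ℋ d H) => X zj) (P0_comp_shift P hP j)
      simp only [comp_apply, ContinuousLinearMap.zero_apply] at h
      rw [h, sub_self]
    have hPnzj : P n zj = 0 := by
      rw [hzj, hfun2, hy, map_zero]
    have hdecomp : shiftL j a + y = shiftL j (a + zj) + c := by
      rw [map_add, hc]; abel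
    have hX1 : (inner ℂ (T (shiftL j (a + zj))) c : ℂ) = 0 :=
      T_cross_right T P hT3 hP j (a + zj) c hc0 hcj
    have hX2 : (inner ℂ (T c) (shiftL j (a + zj)) : ℂ) = 0 :=
      T_cross_left T P hT3 hP j (a + zj) c hc0 hcj
    have hform : (inner ℂ (T (shiftL j a + y)) (shiftL j a + y) : ℂ)
        = inner ℂ (T (shiftL j (a + zj))) (shiftL j (a + zj)) + inner ℂ (T c) c := by
      rw [hdecomp, map_add, inner_add_left, inner_add_right, inner_add_right, hX1, hX2]
      ring
    have hS_restrict := form_restrict (P_adj P hP (n+1)) (hS (n+1)).2.1 (shiftL j a) y hy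
    have hmain : (inner ℂ (T (shiftL j a + y)) (shiftL j a + y) : ℂ).re
        < (inner ℂ (S (n+1) (shiftL j a)) (shiftL j a) : ℂ).re + ε := by
      rw [ContinuousLinearMap.sub_apply, inner_sub_left, Complex.sub_re, hS_restrict] at hlt
      linarith
    have hinv : (inner ℂ (T (shiftL j (a + zj))) (shiftL j (a + zj)) : ℂ)
        = inner ℂ (T (a + zj)) (a + zj) := by
      conv_rhs => rw [← hTinv (a + zj)]
      rw [adjoint_inner_left]
    have heasy := easy_dir (hS n) (P_adj P hP n) a zj hPnzj
    have hTpc := cnonneg_re (hTpos c)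
    have hsplit : (inner ℂ (T (shiftL j a + y)) (shiftL j a + y) : ℂ).re
        = (inner ℂ (T (a + zj)) (a + zj) : ℂ).re + (inner ℂ (T c) c : ℂ).re := by
      rw [hform, Complex.add_re, hinv]
    linarith
  -- combine into operator equality
  have hq : ∀ z, (inner ℂ (Dop z) z : ℂ) = inner ℂ (S n z) z := by
    intro z
    apply Complex.ext
    · rw [hDform]
      exact le_antisymm (hle z) (hge z)
    · rw [hDform, cnonneg_im ((hS (n+1)).1 (shiftL j z)), cnonneg_im ((hS n).1 z)]
  have h3 : (Dop : ℋ d H →ₗ[ℂ] ℋ d H) = ((S n : ℋ d H →L[ℂ] ℋ d H) : ℋ d H →ₗ[ℂ] ℋ d H) :=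
    (ext_inner_map _ _).mp fun z => hq z
  exact ContinuousLinearMap.coe_injective h3
include hT1 hT2 hT3 hP hS hTpos in
lemma claimB (n : ℕ) {j j' : Fin d} (hjj : j ≠ j') (a0 b0 : ℋ d H) :
    (inner ℂ (S (n+1) (shiftL j a0)) (shiftL j' b0) : ℂ) = 0 := by
  have hDjRj : ∀ (k : Fin d) (f : ℋ d H), adjoint (shiftL k) (shiftL k f) = f := fun k f => by
    have h := congrArg (fun (X : ℋ d H →L[ℂ] ℋ d H) => X f) (adj_shift_comp_shift k)
    simpa [comp_apply] using h
  have hDne : ∀ (k l : Fin d), k ≠ l → ∀ f : ℋ d H,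
      adjoint (shiftL k) (shiftL l f) = 0 := fun k l hkl f => by
    have h := congrArg (fun (X : ℋ d H →L[ℂ] ℋ d H) => X f) (adj_shift_comp_shift_ne hkl)
    simpa [comp_apply] using h
  have hfun1 : ∀ (k : Fin d) (f : ℋ d H), shiftL k (P n f) = P (n+1) (shiftL k f) :=
    fun k f => by
    have h := congrArg (fun (X : ℋ d H →L[ℂ] ℋ d H) => X f) (P_shift P hP n k)
    simpa [comp_apply] using h.symm
  have hfun2 : ∀ (k : Fin d) (f : ℋ d H),
      P n (adjoint (shiftL k) f) = adjoint (shiftL k) (P (n+1) f) := fun k f => by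
    have h := congrArg (fun (X : ℋ d H →L[ℂ] ℋ d H) => X f) (shift_adj_P P hP n k)
    simpa [comp_apply] using h.symm
  have hSsa : adjoint (S (n+1)) = S (n+1) := adj_eq_of_pos (hS (n+1)).1
  -- step 1: nonnegativity of the symmetrized cross term
  have hsum : ∀ a b : ℋ d H, 0 ≤ (inner ℂ (S (n+1) (shiftL j a)) (shiftL j' b) : ℂ).re
      + (inner ℂ (S (n+1) (shiftL j' b)) (shiftL j a) : ℂ).re := by
    intro a b
    refine le_of_forall_pos_le_add fun ε hε => ?_
    set u : ℋ d H := shiftL j a + shiftL j' b with hu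
    obtain ⟨y, hy, hlt⟩ := key_approx (hS (n+1)) (P_adj P hP (n+1)) (P_idem P hP (n+1)) u hε
    set zj := adjoint (shiftL j) y with hzj
    set zj' := adjoint (shiftL j') y with hzj'
    set c := y - shiftL j zj - shiftL j' zj' with hc
    have hcj : adjoint (shiftL j) c = 0 := by
      rw [hc, map_sub, map_sub, hDjRj, hDne j j' hjj, hzj, sub_zero, sub_self]
    have hcj' : adjoint (shiftL j') c = 0 := by
      rw [hc, map_sub, map_sub, hDjRj, hDne j' j (Ne.symm hjj)]
      simp [hzj']
    have hP0y : P 0 y = 0 := by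
      have h := congrArg (fun (X : ℋ d H →L[ℂ] ℋ d H) => X y) (P0_comp_P P hP (n+1))
      simp only [comp_apply] at h
      rw [← h, hy, map_zero]
    have hP0R : ∀ (k : Fin d) (f : ℋ d H), P 0 (shiftL k f) = 0 := fun k f => by
      have h := congrArg (fun (X : ℋ d H →L[ℂ] ℋ d H) => X f) (P0_comp_shift P hP k)
      simpa [comp_apply] using h
    have hc0 : P 0 c = 0 := by
      rw [hc, map_sub, map_sub, hP0y, hP0R, hP0R, sub_zero, sub_self]
    have hPnzj : P n zj = 0 := by rw [hzj, hfun2, hy, map_zero]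
    have hPnzj' : P n zj' = 0 := by rw [hzj', hfun2, hy, map_zero]
    have hdecomp : u + y = shiftL j (a + zj) + shiftL j' (b + zj') + c := by
      rw [map_add, map_add, hu, hc]; abel
    -- the six vanishing cross terms
    have hab : (inner ℂ (T (shiftL j (a + zj))) (shiftL j' (b + zj')) : ℂ) = 0 :=
      T_shift_orth_form T hT3 hjj _ _
    have hba : (inner ℂ (T (shiftL j' (b + zj'))) (shiftL j (a + zj)) : ℂ) = 0 :=
      T_shift_orth_form T hT3 (Ne.symm hjj) _ _
    have hac : (inner ℂ (T (shiftL j (a + zj))) c : ℂ) = 0 :=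
      T_cross_right T P hT3 hP j (a + zj) c hc0 hcj
    have hca : (inner ℂ (T c) (shiftL j (a + zj)) : ℂ) = 0 :=
      T_cross_left T P hT3 hP j (a + zj) c hc0 hcj
    have hbc : (inner ℂ (T (shiftL j' (b + zj'))) c : ℂ) = 0 :=
      T_cross_right T P hT3 hP j' (b + zj') c hc0 hcj'
    have hcb : (inner ℂ (T c) (shiftL j' (b + zj')) : ℂ) = 0 :=
      T_cross_left T P hT3 hP j' (b + zj') c hc0 hcj'
    have hform : (inner ℂ (T (u + y)) (u + y) : ℂ)
        = inner ℂ (T (shiftL j (a + zj))) (shiftL j (a + zj))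
          + inner ℂ (T (shiftL j' (b + zj'))) (shiftL j' (b + zj')) + inner ℂ (T c) c := by
      rw [hdecomp]
      rw [map_add, map_add]
      rw [inner_add_left, inner_add_left, inner_add_right, inner_add_right, inner_add_right,
        inner_add_right, inner_add_right, inner_add_right]
      rw [hab, hba, hac, hca, hbc, hcb]
      ring
    -- lower bounds for the diagonal terms
    have heasy1 : (inner ℂ (S (n+1) (shiftL j a)) (shiftL j a) : ℂ).re
        ≤ (inner ℂ (T (shiftL j (a + zj))) (shiftL j (a + zj)) : ℂ).re := by
      have hyz : P (n+1) (shiftL j zj) = 0 := by rw [← hfun1, hPnzj, map_zero]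
      have h := easy_dir (hS (n+1)) (P_adj P hP (n+1)) (shiftL j a) (shiftL j zj) hyz
      have h2 : shiftL j a + shiftL j zj = shiftL j (a + zj) := (map_add _ _ _).symm
      rwa [h2] at h
    have heasy2 : (inner ℂ (S (n+1) (shiftL j' b)) (shiftL j' b) : ℂ).re
        ≤ (inner ℂ (T (shiftL j' (b + zj'))) (shiftL j' (b + zj')) : ℂ).re := by
      have hyz : P (n+1) (shiftL j' zj') = 0 := by rw [← hfun1, hPnzj', map_zero]
      have h := easy_dir (hS (n+1)) (P_adj P hP (n+1)) (shiftL j' b) (shiftL j' zj') hyz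
      have h2 : shiftL j' b + shiftL j' zj' = shiftL j' (b + zj') := (map_add _ _ _).symm
      rwa [h2] at h
    have hTpc := cnonneg_re (hTpos c)
    -- upper bound from key approximation
    have hS_restrict := form_restrict (P_adj P hP (n+1)) (hS (n+1)).2.1 u y hy
    have hmain : (inner ℂ (T (u + y)) (u + y) : ℂ).re
        < (inner ℂ (S (n+1) u) u : ℂ).re + ε := by
      rw [ContinuousLinearMap.sub_apply, inner_sub_left, Complex.sub_re, hS_restrict] at hlt
      linarith
    -- expansion of the S-form of u
    have hSu : (inner ℂ (S (n+1) u) u : ℂ)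
        = inner ℂ (S (n+1) (shiftL j a)) (shiftL j a)
          + inner ℂ (S (n+1) (shiftL j' b)) (shiftL j' b)
          + inner ℂ (S (n+1) (shiftL j a)) (shiftL j' b)
          + inner ℂ (S (n+1) (shiftL j' b)) (shiftL j a) := by
      rw [hu, map_add, inner_add_left, inner_add_right, inner_add_right]
      ring
    have hformre : (inner ℂ (T (u + y)) (u + y) : ℂ).re
        = (inner ℂ (T (shiftL j (a + zj))) (shiftL j (a + zj)) : ℂ).re
          + (inner ℂ (T (shiftL j' (b + zj'))) (shiftL j' (b + zj')) : ℂ).re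
          + (inner ℂ (T c) c : ℂ).re := by
      rw [hform, Complex.add_re, Complex.add_re]
    have hSure : (inner ℂ (S (n+1) u) u : ℂ).re
        = (inner ℂ (S (n+1) (shiftL j a)) (shiftL j a) : ℂ).re
          + (inner ℂ (S (n+1) (shiftL j' b)) (shiftL j' b) : ℂ).re
          + (inner ℂ (S (n+1) (shiftL j a)) (shiftL j' b) : ℂ).re
          + (inner ℂ (S (n+1) (shiftL j' b)) (shiftL j a) : ℂ).re := by
      rw [hSu, Complex.add_re, Complex.add_re, Complex.add_re]
    linarith
  -- step 2: the symmetrized cross term vanishes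
  have hzero : ∀ a b : ℋ d H, (inner ℂ (S (n+1) (shiftL j a)) (shiftL j' b) : ℂ).re
      + (inner ℂ (S (n+1) (shiftL j' b)) (shiftL j a) : ℂ).re = 0 := by
    intro a b
    have h1 := hsum a b
    have h2 := hsum (-a) b
    rw [map_neg, map_neg, inner_neg_left, inner_neg_right, Complex.neg_re, Complex.neg_re]
      at h2
    linarith
  -- step 3: real part of the cross term vanishes
  have hre : ∀ a b : ℋ d H, (inner ℂ (S (n+1) (shiftL j a)) (shiftL j' b) : ℂ).re = 0 := by
    intro a b
    have h1 := hzero a b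
    have hconj : (inner ℂ (S (n+1) (shiftL j' b)) (shiftL j a) : ℂ)
        = (starRingEnd ℂ) (inner ℂ (S (n+1) (shiftL j a)) (shiftL j' b) : ℂ) := by
      rw [move_sa hSsa, ← inner_conj_symm]
    rw [hconj, Complex.conj_re] at h1
    linarith
  -- step 4: conclude
  apply Complex.ext
  · exact hre a0 b0
  · have h := hre (Complex.I • a0) b0
    rw [map_smul, map_smul, inner_smul_left] at h
    simp only [Complex.conj_I, neg_mul, Complex.neg_re, Complex.mul_re, Complex.I_re,
      Complex.I_im] at h
    simp only [Complex.zero_im, zero_mul, one_mul, zero_sub, neg_neg] at h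
    simpa using h


end SchurMain


/-- **Schur complement recurrence for positive multi-Toeplitz operator matrices.**
The space `H₀ ⊕ H₁ ⊕ ⋯` (with `H_k = H ⊗ (ℂᵈ)^{⊗k}`) is realized as the `H`-valued `ℓ²`
space over the free monoid of words `List (Fin d)`; the multi-Toeplitz matrix `T_Q` with
entries `(T_Q)_{ij} = Q_{i-j} ⊗ I_d^{⊗ min(i,j)}` (and `Q_{-k} = Q_k^*`) is encoded through
its matrix entries: the `(uv, v)` block is `Q_u`, the `(w, uw)` block is `Q_u^*`, and all
other blocks vanish.  `P m` is the projection onto words of length `≤ m` and `S m` is the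
Schur complement of `T_Q` supported on rows and columns `0, …, m`.  Conclusion: for `m ≥ 1`,
`S(m) = [[A, B^*], [B, S(m-1) ⊗ I_d]]`, i.e. the compression of `S(m)` to the rows and
columns `1, …, m` equals the ampliation `S(m-1) ⊗ I_d` (entrywise, where the tensor factor
corresponds to a common final letter). -/
theorem stmt_12 (d : ℕ) {H : Type*}
    [NormedAddCommGroup H] [InnerProductSpace ℂ H] [CompleteSpace H]
    (Q : List (Fin d) → (H →L[ℂ] H))
    (T : lp (fun _ : List (Fin d) => H) 2 →L[ℂ] lp (fun _ : List (Fin d) => H) 2)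
    (hT1 : ∀ (u v : List (Fin d)) (x y : H),
      (inner ℂ (T (lp.single 2 v x)) (lp.single 2 (u ++ v) y) : ℂ) = inner ℂ (Q u x) y)
    (hT2 : ∀ (u w : List (Fin d)) (x y : H),
      (inner ℂ (T (lp.single 2 (u ++ w) x)) (lp.single 2 w y) : ℂ) = inner ℂ x (Q u y))
    (hT3 : ∀ (v w : List (Fin d)), (¬ ∃ u, w = u ++ v) → (¬ ∃ u, v = u ++ w) →
      ∀ (x y : H), (inner ℂ (T (lp.single 2 v x)) (lp.single 2 w y) : ℂ) = 0)
    (hTpos : ∀ z, 0 ≤ (inner ℂ (T z) z : ℂ))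
    (P : ℕ → (lp (fun _ : List (Fin d) => H) 2 →L[ℂ] lp (fun _ : List (Fin d) => H) 2))
    (hP : ∀ (m : ℕ) (w : List (Fin d)) (x : H),
      P m (lp.single 2 w x) = if w.length ≤ m then lp.single 2 w x else 0)
    (S : ℕ → (lp (fun _ : List (Fin d) => H) 2 →L[ℂ] lp (fun _ : List (Fin d) => H) 2))
    (hS : ∀ m, IsSchurCompl T (P m) (S m)) :
    ∀ m : ℕ, 1 ≤ m → ∀ (j j' : Fin d) (v w : List (Fin d)) (x y : H),
      (inner ℂ (S m (lp.single 2 (v ++ [j]) x)) (lp.single 2 (w ++ [j']) y) : ℂ)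
        = if j = j' then (inner ℂ (S (m - 1) (lp.single 2 v x)) (lp.single 2 w y) : ℂ)
          else 0 := by
  intro m hm j j' v w x y
  obtain ⟨n, rfl⟩ : ∃ n, m = n + 1 := ⟨m - 1, by omega⟩
  have hn : n + 1 - 1 = n := rfl
  rw [hn]
  have hsv : lp.single 2 (v ++ [j]) x = shiftL j (lp.single 2 v x) := (shiftL_single j v x).symm
  have hsw : lp.single 2 (w ++ [j']) y = shiftL j' (lp.single 2 w y) :=
    (shiftL_single j' w y).symm
  rw [hsv, hsw]
  by_cases hjj : j = j'
  · subst hjj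
    rw [if_pos rfl]
    have hA := claimA T Q P S hT3 hP hT1 hT2 hTpos hS n j
    have hfun := congrArg
      (fun (X : lp (fun _ : List (Fin d) => H) 2 →L[ℂ] lp (fun _ : List (Fin d) => H) 2) =>
        X (lp.single 2 v x)) hA
    simp only [comp_apply] at hfun
    rw [← adjoint_inner_left, hfun]
  · rw [if_neg hjj]
    exact claimB T Q P S hT3 hP hT1 hT2 hTpos hS n hjj (lp.single 2 v x) (lp.single 2 w y)
end
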